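/- Suppose h is analytic on the closed unit disk |z| ≤ 1 and satisfies |h(z)| ≤ |Re z|^{-c} there for some constant c > 0. Then for each 0 < ρ < 1 there is a constant A depending only on c and ρ such that |h(z)| ≤ A for all |z| ≤ ρ. -/

import Mathlib

open Complex Metric

lemma aux_re_eq (z : ℂ) : ((1 + z ^ 2) / 2).re = (1 + z.re ^ 2 - z.im ^ 2) / 2 := by
  simp [Complex.div_re, Complex.normSq, Complex.add_re, Complex.mul_re, sq]
  ring

lemma aux_sq_le {z : ℂ} (hz : ‖z‖ ≤ 1) : z.re ^ 2 + z.im ^ 2 ≤ 1 := by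
  have h := Complex.sq_norm z
  rw [Complex.normSq_apply] at h
  nlinarith [norm_nonneg z]

lemma aux_abs_eq {z : ℂ} (hz : ‖z‖ = 1) :
    ‖1 + z ^ 2‖ = 2 * |z.re| := by
  have h1 : 1 + z ^ 2 = z * ((starRingEnd ℂ) z + z) := by
    have := Complex.mul_conj z
    have hn : Complex.normSq z = 1 := by
      rw [← Complex.sq_norm, hz]; norm_num
    rw [mul_add, this, hn]
    push_cast
    ring
  rw [h1, norm_mul, hz, one_mul]
  have h2 : (starRingEnd ℂ) z + z = (2 * z.re : ℝ) := by
    rw [add_comm, Complex.add_conj]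
  rw [h2, Complex.norm_real, Real.norm_eq_abs, abs_mul]
  norm_num

theorem stmt15 (c : ℝ) (hc : 0 < c) (ρ : ℝ) (hρ0 : 0 < ρ) (hρ1 : ρ < 1) :
    ∃ A : ℝ, ∀ h : ℂ → ℂ, DifferentiableOn ℂ h (closedBall 0 1) →
      (∀ z ∈ closedBall (0 : ℂ) 1, z.re ≠ 0 → ‖h z‖ ≤ |z.re| ^ (-c)) →
      ∀ z ∈ closedBall (0 : ℂ) ρ, ‖h z‖ ≤ A := by
  have hB : (0:ℝ) < (1 - ρ ^ 2) / 2 := by nlinarith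
  refine ⟨((1 - ρ ^ 2) / 2) ^ (-c), ?_⟩
  intro h hdiff hbound z hz
  set φ : ℂ → ℂ := fun w => ((1 + w ^ 2) / 2) ^ (c : ℂ) with hφ
  set g : ℂ → ℂ := fun w => h w * φ w with hg
  -- φ is differentiable on the open ball
  have hφdiff : DifferentiableOn ℂ φ (ball 0 1) := by
    intro w hw
    have hw1 : ‖w‖ < 1 := by simpa using mem_ball_zero_iff.mp hw
    have hre : 0 < ((1 + w ^ 2) / 2).re := by
      rw [aux_re_eq]
      have h2 : w.re ^ 2 + w.im ^ 2 < 1 := by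
        have := Complex.sq_norm w
        rw [Complex.normSq_apply] at this
        nlinarith [norm_nonneg w]
      nlinarith [sq_nonneg w.re]
    have hd : DifferentiableAt ℂ (fun w : ℂ => (1 + w ^ 2) / 2) w := by
      fun_prop
    exact ((hd.cpow (differentiableAt_const _) (Or.inl hre))).differentiableWithinAt
  -- φ is continuous on the closed ball
  have hφcont : ContinuousOn φ (closedBall 0 1) := by
    intro w hw
    have hw1 : ‖w‖ ≤ 1 := by simpa using mem_closedBall_zero_iff.mp hw
    have hre : 0 ≤ ((1 + w ^ 2) / 2).re := by
      rw [aux_re_eq]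
      have := aux_sq_le hw1
      nlinarith [sq_nonneg w.re]
    have hcw : ContinuousAt (fun x : ℂ => x ^ (c : ℂ)) ((1 + w ^ 2) / 2) :=
      Complex.continuousAt_cpow_const_of_re_pos (Or.inl hre) (by simpa using hc)
    have hbase : ContinuousAt (fun w : ℂ => (1 + w ^ 2) / 2) w := by fun_prop
    exact (ContinuousAt.comp (x := w) hcw hbase).continuousWithinAt
  -- g satisfies DiffContOnCl
  have hgdc : DiffContOnCl ℂ g (ball 0 1) := by
    constructor
    · exact (hdiff.mono ball_subset_closedBall).mul hφdiff
    · rw [closure_ball (0:ℂ) one_ne_zero]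
      exact hdiff.continuousOn.mul hφcont
  -- boundary bound
  have hbd : ∀ w ∈ frontier (ball (0:ℂ) 1), ‖g w‖ ≤ 1 := by
    intro w hw
    rw [frontier_ball (0:ℂ) one_ne_zero, mem_sphere_zero_iff_norm] at hw
    have hwabs : ‖w‖ = 1 := hw
    have habs := aux_abs_eq hwabs
    by_cases hre : w.re = 0
    · have h0 : 1 + w ^ 2 = 0 := by
        have : ‖1 + w ^ 2‖ = 0 := by rw [habs, hre]; simp
        exact norm_eq_zero.mp this
      have : φ w = 0 := by
        rw [hφ]
        simp only [h0, zero_div]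
        exact Complex.zero_cpow (by exact_mod_cast hc.ne')
      simp [hg, this]
    · have hwc : w ∈ closedBall (0:ℂ) 1 := by
        simp [mem_closedBall_zero_iff, hw]
      have hh := hbound w hwc hre
      have hφabs : ‖φ w‖ = |w.re| ^ c := by
        rw [hφ]
        rw [Complex.norm_cpow_real, norm_div, habs]
        norm_num
      have hrepos : 0 < |w.re| := abs_pos.mpr hre
      calc ‖g w‖ = ‖h w‖ * ‖φ w‖ := by
            simp [hg]
        _ ≤ |w.re| ^ (-c) * |w.re| ^ c := by
            rw [hφabs]
            exact mul_le_mul_of_nonneg_right hh (Real.rpow_nonneg (abs_nonneg _) c)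
        _ = 1 := by
            rw [← Real.rpow_add hrepos, neg_add_cancel, Real.rpow_zero]
  -- maximum modulus
  have hz1 : z ∈ closedBall (0:ℂ) 1 :=
    closedBall_subset_closedBall hρ1.le hz
  have hgle : ‖g z‖ ≤ 1 := by
    apply Complex.norm_le_of_forall_mem_frontier_norm_le isBounded_ball hgdc hbd
    rw [closure_ball (0:ℂ) one_ne_zero]
    exact hz1
  -- lower bound on |φ z|
  have hzρ : ‖z‖ ≤ ρ := by simpa [mem_closedBall_zero_iff] using hz
  have hlow : (1 - ρ ^ 2) / 2 ≤ ‖(1 + z ^ 2) / 2‖ := by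
    have h1 : (1:ℝ) - ‖z ^ 2‖ ≤ ‖1 + z ^ 2‖ := by
      have := norm_sub_norm_le (1 : ℂ) (-(z ^ 2))
      simpa [sub_neg_eq_add] using this
    have h2 : ‖z ^ 2‖ ≤ ρ ^ 2 := by
      rw [norm_pow]
      exact pow_le_pow_left₀ (norm_nonneg z) hzρ 2
    rw [norm_div]
    simp only [Complex.norm_ofNat]
    linarith
  have hφpos : 0 < ‖φ z‖ := by
    rw [hφ, Complex.norm_cpow_real]
    exact Real.rpow_pos_of_pos (lt_of_lt_of_le hB hlow) c
  have hφge : ((1 - ρ ^ 2) / 2) ^ c ≤ ‖φ z‖ := by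
    rw [hφ, Complex.norm_cpow_real]
    exact Real.rpow_le_rpow hB.le hlow hc.le
  have hmul : ‖h z‖ * ‖φ z‖ ≤ 1 := by
    have : ‖g z‖ = ‖h z‖ * ‖φ z‖ := by
      simp [hg]
    linarith [hgle, this.symm.le, this.le]
  rw [Real.rpow_neg hB.le]
  rw [← one_div]
  rw [le_div_iff₀ (Real.rpow_pos_of_pos hB c)]
  calc ‖h z‖ * ((1 - ρ ^ 2) / 2) ^ c
      ≤ ‖h z‖ * ‖φ z‖ :=
        mul_le_mul_of_nonneg_left hφge (norm_nonneg _)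
    _ ≤ 1 := hmul
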